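/- For every natural number k and every real λ with k·|λ| < 1 and |λ| < 1, one has Σ_{n=0}^∞ S_2(n,k) T_n(1) = (1/k!) Σ_{j=0}^k C(k,j) (−1)^{k−j} F_j, where F_j = (e_λ(j) − e_λ(1))/(j − 1) for j ≠ 1 and F_1 = e_λ(1)/(1+λ) (the limiting value at j = 1), S_2(n,k) denotes the Stirling numbers of the second kind, and the series on the left converges. -/

import Mathlib

noncomputable section

/-- Generalized falling factorial `(x)_{n,λ} = x(x-λ)⋯(x-(n-1)λ)`, with `(x)_{0,λ} = 1`. -/
def dff (lam x : ℝ) (n : ℕ) : ℝ := ∏ i ∈ Finset.range n, (x - i * lam)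

/-- Degenerate exponential `e_λ(y) = ∑_{n=0}^∞ (1)_{n,λ} y^n / n!`. -/
def dexp (lam y : ℝ) : ℝ := ∑' n : ℕ, dff lam 1 n * y ^ n / n.factorial

/-- Truncated degenerate exponential tail
`T_n(y) = e_λ(y) - ∑_{k=0}^n (1)_{k,λ} y^k / k!`. -/
def dtail (lam y : ℝ) (n : ℕ) : ℝ :=
  dexp lam y - ∑ k ∈ Finset.range (n + 1), dff lam 1 k * y ^ k / k.factorial

/-- Stirling number of the second kind, as a real number:
`S_2(n,k) = (1/k!) ∑_{j=0}^k (-1)^{k-j} C(k,j) j^n`. -/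
def stirling2 (n k : ℕ) : ℝ :=
  (1 / (k.factorial : ℝ)) *
    ∑ j ∈ Finset.range (k + 1), (-1 : ℝ) ^ (k - j) * (k.choose j : ℝ) * (j : ℝ) ^ n

namespace S12

open Filter Finset Topology

def a (lam : ℝ) (p : ℕ) : ℝ := dff lam 1 p / p.factorial

lemma dff_one_succ (lam : ℝ) (p : ℕ) :
    dff lam 1 (p + 1) = dff lam 1 p * (1 - p * lam) := by
  simp [dff, Finset.prod_range_succ]

lemma a_succ (lam : ℝ) (p : ℕ) :
    a lam (p + 1) = a lam p * (1 - p * lam) / ((p : ℝ) + 1) := by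
  have hf : (p.factorial : ℝ) ≠ 0 := Nat.cast_ne_zero.mpr p.factorial_ne_zero
  have hp : ((p : ℝ) + 1) ≠ 0 := by positivity
  have hfs : (((p + 1).factorial : ℕ) : ℝ) = ((p : ℝ) + 1) * p.factorial := by
    rw [Nat.factorial_succ]; push_cast; ring
  rw [a, a, dff_one_succ, hfs, div_mul_eq_mul_div, div_div,
    mul_comm ((p:ℝ)+1) (p.factorial:ℝ)]

lemma abs_a_succ (lam : ℝ) (p : ℕ) :
    |a lam (p + 1)| = |a lam p| * |1 - p * lam| / ((p : ℝ) + 1) := by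
  rw [a_succ, abs_div, abs_mul, abs_of_pos (by positivity : (0:ℝ) < (p : ℝ) + 1)]

lemma lemA (lam : ℝ) {M : ℝ} (hM : 0 ≤ M) (hML : M * |lam| < 1) :
    Summable (fun p : ℕ => ((p : ℝ) + 1) * M ^ p * |a lam p|) := by
  set L := |lam| with hLdef
  have hL0 : 0 ≤ L := abs_nonneg _
  set r : ℝ := (1 + M * L) / 2 with hrdef
  have hr1 : r < 1 := by rw [hrdef]; linarith
  have hMLr : M * L < r := by rw [hrdef]; linarith
  apply summable_of_ratio_norm_eventually_le hr1
  have h0 : Tendsto (fun p : ℕ => 1 / ((p : ℝ) + 1)) atTop (𝓝 0) :=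
    tendsto_one_div_add_atTop_nhds_zero_nat
  have h1 : Tendsto (fun p : ℕ => M * ((1:ℝ) + 1 / ((p : ℝ) + 1))) atTop (𝓝 (M * (1 + 0))) :=
    (tendsto_const_nhds.add h0).const_mul M
  have h2 : Tendsto (fun p : ℕ => L + (1 - L) * (1 / ((p : ℝ) + 1))) atTop (𝓝 (L + (1 - L) * 0)) :=
    tendsto_const_nhds.add (h0.const_mul (1 - L))
  have hu : Tendsto
      (fun p : ℕ => M * (1 + 1 / ((p : ℝ) + 1)) * (L + (1 - L) * (1 / ((p : ℝ) + 1))))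
      atTop (𝓝 (M * L)) := by
    have := h1.mul h2
    simpa using this
  filter_upwards [hu.eventually_lt_const hMLr] with p hp
  have hP : (0:ℝ) < (p : ℝ) + 1 := by positivity
  set P : ℝ := (p : ℝ) + 1 with hPdef
  have hp' : M * (P + 1) * (1 + p * L) < r * P ^ 2 := by
    have h2 := mul_lt_mul_of_pos_right hp (show (0:ℝ) < P ^ 2 by positivity)
    have heq : M * (1 + 1 / P) * (L + (1 - L) * (1 / P)) * P ^ 2
        = M * (P + 1) * (1 + p * L) := by
      field_simp
      ring
    rw [heq] at h2
    exact h2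
  have habs : |1 - (p:ℝ) * lam| ≤ 1 + p * L := by
    calc |1 - (p:ℝ) * lam| ≤ |(1:ℝ)| + |(p:ℝ) * lam| := abs_sub _ _
    _ = 1 + p * L := by rw [abs_one, abs_mul, Nat.abs_cast]
  have hnorm : ∀ q : ℕ, ‖((q:ℝ)+1) * M ^ q * |a lam q|‖ = ((q:ℝ)+1) * M ^ q * |a lam q| :=
    fun q => Real.norm_of_nonneg (by positivity)
  rw [hnorm, hnorm]
  have goal_eq : (((p+1:ℕ):ℝ) + 1) * M ^ (p+1) * |a lam (p+1)|
      = (P + 1) * (M * M ^ p) * |a lam p| * |1 - (p:ℝ) * lam| / P := by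
    rw [abs_a_succ, pow_succ]; push_cast; ring
  rw [goal_eq]
  calc (P + 1) * (M * M ^ p) * |a lam p| * |1 - (p:ℝ) * lam| / P
      ≤ (P + 1) * (M * M ^ p) * |a lam p| * (1 + p * L) / P := by
        gcongr
    _ = (M * (P + 1) * (1 + p * L)) * (M ^ p * |a lam p|) / P := by ring
    _ ≤ (r * P ^ 2) * (M ^ p * |a lam p|) / P := by
        gcongr
    _ = r * (P * M ^ p * |a lam p|) := by field_simp
lemma summable_a_mul_pow (lam : ℝ) {y : ℝ} (hy : 0 ≤ y) (hyL : y * |lam| < 1) :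
    Summable (fun p : ℕ => a lam p * y ^ p) := by
  apply Summable.of_norm
  apply Summable.of_nonneg_of_le (fun p => norm_nonneg _) _ (lemA lam hy hyL)
  intro p
  rw [Real.norm_eq_abs, abs_mul, abs_pow, abs_of_nonneg hy]
  nlinarith [abs_nonneg (a lam p), pow_nonneg hy p,
    mul_nonneg (pow_nonneg hy p) (abs_nonneg (a lam p))]

lemma hasSum_dexp (lam : ℝ) {y : ℝ} (hy : 0 ≤ y) (hyL : y * |lam| < 1) :
    HasSum (fun p : ℕ => a lam p * y ^ p) (dexp lam y) := by
  have hs := summable_a_mul_pow lam hy hyL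
  have h : (fun p : ℕ => a lam p * y ^ p)
      = fun p : ℕ => dff lam 1 p * y ^ p / p.factorial := by
    funext p; rw [a]; ring
  have : dexp lam y = ∑' p : ℕ, a lam p * y ^ p := by rw [dexp, h]
  rw [this]
  exact hs.hasSum

lemma summable_a (lam : ℝ) (hl : |lam| < 1) : Summable (fun p : ℕ => a lam p) := by
  have := summable_a_mul_pow lam zero_le_one (by simpa using hl)
  simpa using this

lemma hasSum_a (lam : ℝ) (hl : |lam| < 1) :
    HasSum (fun p : ℕ => a lam p) (dexp lam 1) := by
  have := hasSum_dexp lam zero_le_one (by simpa using hl)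
  simpa using this

lemma dtail_eq (lam : ℝ) (hl : |lam| < 1) (n : ℕ) :
    dtail lam 1 n = ∑' m : ℕ, a lam (m + (n + 1)) := by
  have hs := summable_a lam hl
  have key := Summable.sum_add_tsum_nat_add (f := fun p => a lam p) (n + 1) hs
  have h1 : dexp lam 1 = ∑' p : ℕ, a lam p := by
    rw [dexp]; congr 1; funext p; rw [a]; ring
  have h2 : ∑ k ∈ Finset.range (n + 1), dff lam 1 k * 1 ^ k / k.factorial
      = ∑ k ∈ Finset.range (n + 1), a lam k := by
    apply Finset.sum_congr rfl; intro k _; rw [a]; ring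
  rw [dtail, h1, h2, ← key]
  ring
lemma core (lam : ℝ) (j : ℕ) (hjL : (j : ℝ) * |lam| < 1) (hl : |lam| < 1) :
    HasSum (fun n : ℕ => (j : ℝ) ^ n * dtail lam 1 n)
      (if j = 1 then dexp lam 1 / (1 + lam)
       else (dexp lam j - dexp lam 1) / ((j : ℝ) - 1)) := by
  set M : ℝ := max 1 (j : ℝ) with hMdef
  have hM1 : (1:ℝ) ≤ M := le_max_left _ _
  have hM0 : (0:ℝ) ≤ M := by linarith
  have hjM : (j : ℝ) ≤ M := le_max_right _ _
  have hj0 : (0:ℝ) ≤ (j : ℝ) := Nat.cast_nonneg j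
  have hML : M * |lam| < 1 := by
    rw [hMdef, max_mul_of_nonneg _ _ (abs_nonneg lam)]
    exact max_lt (by simpa using hl) hjL
  -- the double-indexed family
  set F : ℕ × ℕ → ℝ := fun q => if q.2 < q.1 then (j : ℝ) ^ q.2 * a lam q.1 else 0 with hFdef
  have hF0 : ∀ p n : ℕ, ¬ n < p → F (p, n) = 0 := by
    intro p n h
    simp only [hFdef]
    exact if_neg h
  -- summability of the norms
  have hg : Summable (fun q : ℕ × ℕ => ‖F q‖) := by
    have hnn : 0 ≤ fun q : ℕ × ℕ => ‖F q‖ := fun q => norm_nonneg _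
    rw [summable_prod_of_nonneg hnn]
    constructor
    · intro p
      apply summable_of_ne_finset_zero (s := Finset.range p)
      intro n hn
      rw [hF0 p n (by simpa using hn), norm_zero]
    · apply Summable.of_nonneg_of_le (fun p => tsum_nonneg fun n => norm_nonneg _) _
        (lemA lam hM0 hML)
      intro p
      have htsum : ∑' n : ℕ, ‖F (p, n)‖ = ∑ n ∈ Finset.range p, ‖F (p, n)‖ := by
        apply tsum_eq_sum
        intro n hn
        rw [hF0 p n (by simpa using hn), norm_zero]
      rw [htsum]
      calc ∑ n ∈ Finset.range p, ‖F (p, n)‖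
          ≤ ∑ n ∈ Finset.range p, M ^ p * |a lam p| := by
            apply Finset.sum_le_sum
            intro n hn
            have hnp : n < p := Finset.mem_range.mp hn
            rw [hFdef]
            simp only [hnp, if_pos]
            rw [Real.norm_eq_abs, abs_mul, abs_pow, abs_of_nonneg hj0]
            have h1 : (j:ℝ) ^ n ≤ M ^ n := pow_le_pow_left₀ hj0 hjM n
            have h2 : M ^ n ≤ M ^ p := pow_le_pow_right₀ hM1 hnp.le
            nlinarith [abs_nonneg (a lam p)]
        _ = (p : ℝ) * (M ^ p * |a lam p|) := by
            rw [Finset.sum_const, Finset.card_range, nsmul_eq_mul]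
        _ ≤ ((p : ℝ) + 1) * M ^ p * |a lam p| := by
            nlinarith [abs_nonneg (a lam p), pow_nonneg hM0 p]
  have hF : Summable F := Summable.of_norm hg
  set S : ℝ := ∑' q, F q with hSdef
  have hS : HasSum F S := hF.hasSum
  -- row fibers
  have hrow : ∀ p : ℕ, HasSum (fun n => F (p, n))
      ((∑ n ∈ Finset.range p, (j : ℝ) ^ n) * a lam p) := by
    intro p
    have h := hasSum_sum_of_ne_finset_zero (L := SummationFilter.unconditional ℕ) (s := Finset.range p) (f := fun n => F (p, n))
      (fun n hn => hF0 p n (by simpa using hn))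
    have heq : ∑ n ∈ Finset.range p, F (p, n)
        = (∑ n ∈ Finset.range p, (j : ℝ) ^ n) * a lam p := by
      rw [Finset.sum_mul]
      apply Finset.sum_congr rfl
      intro n hn
      have hnp : n < p := Finset.mem_range.mp hn
      simp [hFdef, hnp]
    rwa [heq] at h
  have hRow : HasSum (fun p => (∑ n ∈ Finset.range p, (j : ℝ) ^ n) * a lam p) S :=
    hS.prod_fiberwise hrow
  -- column fibers
  have hcol : ∀ n : ℕ, HasSum (fun p => F (p, n)) ((j : ℝ) ^ n * dtail lam 1 n) := by
    intro n
    have hsa : Summable (fun m : ℕ => a lam (m + (n + 1))) :=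
      (summable_nat_add_iff (n + 1)).mpr (summable_a lam hl)
    have h1 : HasSum (fun m : ℕ => a lam (m + (n + 1))) (dtail lam 1 n) := by
      rw [dtail_eq lam hl n]; exact hsa.hasSum
    have h2 := h1.mul_left ((j : ℝ) ^ n)
    have h3 : (fun m : ℕ => (j : ℝ) ^ n * a lam (m + (n + 1)))
        = fun m : ℕ => F (m + (n + 1), n) := by
      funext m
      have : n < m + (n + 1) := by omega
      simp [hFdef, this]
    rw [h3] at h2
    have h4 := (hasSum_nat_add_iff (f := fun p => F (p, n)) (n + 1)).mp h2
    have h5 : ∑ i ∈ Finset.range (n + 1), F (i, n) = 0 := by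
      apply Finset.sum_eq_zero
      intro i hi
      exact hF0 i n (by have := Finset.mem_range.mp hi; omega)
    rwa [h5, add_zero] at h4
  have hCol : HasSum (fun n => (j : ℝ) ^ n * dtail lam 1 n) S := by
    have hswap : HasSum (F ∘ (Equiv.prodComm ℕ ℕ)) S :=
      ((Equiv.prodComm ℕ ℕ).hasSum_iff).mpr hS
    exact hswap.prod_fiberwise fun n => hcol n
  -- now identify S
  rcases eq_or_ne j 1 with hj1 | hj1
  · subst hj1
    rw [if_pos rfl]
    -- S = ∑' p, p * a p
    have hPsum : Summable (fun p : ℕ => (p : ℝ) * a lam p) := by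
      apply Summable.of_norm
      apply Summable.of_nonneg_of_le (fun p => norm_nonneg _) _ (lemA lam zero_le_one (by simpa using hl))
      intro p
      rw [Real.norm_eq_abs, abs_mul, Nat.abs_cast, one_pow]
      nlinarith [abs_nonneg (a lam p)]
    set S1 : ℝ := ∑' p : ℕ, (p : ℝ) * a lam p with hS1def
    have h4 : HasSum (fun p : ℕ => (p : ℝ) * a lam p) S1 := hPsum.hasSum
    have hfun : (fun p : ℕ => (∑ n ∈ Finset.range p, ((1:ℕ) : ℝ) ^ n) * a lam p)
        = fun p : ℕ => (p : ℝ) * a lam p := by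
      funext p; simp
    have hRow' : HasSum (fun p : ℕ => (p : ℝ) * a lam p) S := by
      rw [← hfun]; exact hRow
    have hS1S : S1 = S := h4.unique hRow'
    have h5 : HasSum (fun p : ℕ => ((p : ℝ) + 1) * a lam (p + 1)) S1 := by
      have h6 := (hasSum_nat_add_iff (f := fun p : ℕ => (p : ℝ) * a lam p) 1).mpr
        (by simpa using h4)
      have : (fun p : ℕ => (((p + 1 : ℕ)) : ℝ) * a lam (p + 1))
          = fun p : ℕ => ((p : ℝ) + 1) * a lam (p + 1) := by
        funext p; push_cast; ring
      rwa [this] at h6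
    have h7 : (fun p : ℕ => ((p : ℝ) + 1) * a lam (p + 1))
        = fun p : ℕ => a lam p - lam * ((p : ℝ) * a lam p) := by
      funext p
      rw [a_succ]
      have hp : ((p : ℝ) + 1) ≠ 0 := by positivity
      field_simp
    rw [h7] at h5
    have h8 : HasSum (fun p : ℕ => a lam p - lam * ((p : ℝ) * a lam p))
        (dexp lam 1 - lam * S1) := (hasSum_a lam hl).sub (h4.mul_left lam)
    have hS1eq : S1 = dexp lam 1 - lam * S1 := h5.unique h8
    have hne : (1 : ℝ) + lam ≠ 0 := by
      have h' := abs_lt.mp hl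
      intro h; linarith [h'.1]
    have hval : dexp lam 1 / (1 + lam) = S1 := by
      rw [div_eq_iff hne]
      linarith [hS1eq]
    rw [hval, hS1S]
    exact hCol
  · rw [if_neg hj1]
    have hjne : ((j : ℝ)) ≠ 1 := by
      intro h; apply hj1; exact_mod_cast h
    have h8 : HasSum (fun p : ℕ => a lam p * (j : ℝ) ^ p) (dexp lam j) :=
      hasSum_dexp lam hj0 hjL
    have h9 : HasSum (fun p : ℕ => a lam p) (dexp lam 1) := hasSum_a lam hl
    have h10 := (h8.sub h9).div_const ((j : ℝ) - 1)
    have hfun : (fun p : ℕ => (∑ n ∈ Finset.range p, (j : ℝ) ^ n) * a lam p)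
        = fun p : ℕ => (a lam p * (j : ℝ) ^ p - a lam p) / ((j : ℝ) - 1) := by
      funext p
      rw [geom_sum_eq hjne]
      field_simp
    rw [← hfun] at h10
    have : (dexp lam j - dexp lam 1) / ((j : ℝ) - 1) = S := h10.unique hRow
    rw [this]
    exact hCol

end S12

theorem stmt_12 (k : ℕ) (lam : ℝ) (hk : (k : ℝ) * |lam| < 1) (hl : |lam| < 1) :
    HasSum (fun n : ℕ => stirling2 n k * dtail lam 1 n)
      ((1 / (k.factorial : ℝ)) * ∑ j ∈ Finset.range (k + 1),
        (k.choose j : ℝ) * (-1 : ℝ) ^ (k - j) *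
          (if j = 1 then dexp lam 1 / (1 + lam)
           else (dexp lam j - dexp lam 1) / ((j : ℝ) - 1))) := by
  have hL0 : 0 ≤ |lam| := abs_nonneg lam
  have hjL : ∀ j ∈ Finset.range (k + 1), (j : ℝ) * |lam| < 1 := by
    intro j hj
    have hjk : (j : ℝ) ≤ (k : ℝ) := by
      exact_mod_cast Nat.lt_succ_iff.mp (Finset.mem_range.mp hj)
    nlinarith
  have hsum := hasSum_sum (s := Finset.range (k + 1))
    (f := fun j (n : ℕ) => ((k.choose j : ℝ) * (-1 : ℝ) ^ (k - j)) * ((j : ℝ) ^ n * dtail lam 1 n))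
    (a := fun j => (k.choose j : ℝ) * (-1 : ℝ) ^ (k - j) *
      (if j = 1 then dexp lam 1 / (1 + lam)
       else (dexp lam j - dexp lam 1) / ((j : ℝ) - 1)))
    (fun j hj => (S12.core lam j (hjL j hj) hl).mul_left _)
  have h2 := hsum.mul_left (1 / (k.factorial : ℝ))
  have hfun : (fun n : ℕ => stirling2 n k * dtail lam 1 n)
      = fun n : ℕ => (1 / (k.factorial : ℝ)) * ∑ j ∈ Finset.range (k + 1),
          ((k.choose j : ℝ) * (-1 : ℝ) ^ (k - j)) * ((j : ℝ) ^ n * dtail lam 1 n) := by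
    funext n
    rw [stirling2, mul_assoc, Finset.sum_mul]
    congr 1
    apply Finset.sum_congr rfl
    intro j _
    ring
  rw [hfun]
  exact h2
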